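/- Let α>1 and β>α−1. Then R_{α,β}(x) = ∑_{n=1}^∞ sin(π n^β x)/n^α is uniformly Hölder continuous on ℝ with exponent (α−1)/β, i.e. there exists C>0 such that |R_{α,β}(x) − R_{α,β}(y)| ≤ C |x−y|^{(α−1)/β} for all x,y ∈ ℝ. -/

import Mathlib

open Real Finset

lemma head_sum {γ : ℝ} (hγ : -1 < γ) (N : ℕ) (hN : 1 ≤ N) :
    ∑ i ∈ Finset.range N, ((i : ℝ) + 1) ^ γ ≤ (1 + 1 / (γ + 1)) * (N : ℝ) ^ (γ + 1) := by
  have hγ1 : 0 < γ + 1 := by linarith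
  have hNpos : (0:ℝ) < N := by exact_mod_cast hN
  have hN1 : (1:ℝ) ≤ N := by exact_mod_cast hN
  have hNg1 : (1:ℝ) ≤ (N:ℝ) ^ (γ+1) := Real.one_le_rpow hN1 hγ1.le
  rcases le_or_gt 0 γ with h0 | h0
  · have hb : ∑ i ∈ Finset.range N, ((i : ℝ) + 1) ^ γ ≤ ∑ _i ∈ Finset.range N, (N:ℝ) ^ γ := by
      apply Finset.sum_le_sum
      intro i hi
      apply Real.rpow_le_rpow (by positivity) _ h0
      exact_mod_cast Nat.succ_le_of_lt (Finset.mem_range.1 hi)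
    calc ∑ i ∈ Finset.range N, ((i : ℝ) + 1) ^ γ ≤ N * (N:ℝ)^γ := by
          simpa [Finset.sum_const, nsmul_eq_mul] using hb
      _ = (N:ℝ) ^ (γ+1) := by rw [Real.rpow_add hNpos, Real.rpow_one]; ring
      _ ≤ (1 + 1/(γ+1)) * (N:ℝ)^(γ+1) := by
          nlinarith [one_div_pos.2 hγ1, Real.rpow_nonneg hNpos.le (γ+1)]
  · obtain ⟨M, rfl⟩ := Nat.exists_eq_add_of_le hN
    have key : ∑ i ∈ Finset.range M, ((1:ℝ) + ((i:ℕ)+1 : ℕ)) ^ γ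
        ≤ ∫ t in (1:ℝ)..(1 + (M:ℕ)), t ^ γ := by
      have := AntitoneOn.sum_le_integral (x₀ := (1:ℝ)) (a := M) (f := fun t : ℝ => t ^ γ)
        (by intro a ha b hb hab
            exact Real.rpow_le_rpow_of_nonpos (by linarith [ha.1]) hab h0.le)
      exact this
    have hint : ∫ t in (1:ℝ)..(1 + (M:ℕ)), t ^ γ
        = ((1 + (M:ℝ)) ^ (γ+1) - 1 ^ (γ+1)) / (γ+1) := by
      rw [integral_rpow (Or.inl hγ)]
    have hX : (1:ℝ) ≤ (1 + (M:ℝ)) ^ (γ+1) := by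
      apply Real.one_le_rpow _ hγ1.le
      have : (0:ℝ) ≤ M := Nat.cast_nonneg M
      linarith
    have tailb : ∑ i ∈ Finset.range M, (((i+1:ℕ) : ℝ) + 1) ^ γ
        ≤ ((1 + (M:ℝ)) ^ (γ+1)) / (γ+1) := by
      calc ∑ i ∈ Finset.range M, (((i+1:ℕ) : ℝ) + 1) ^ γ
          = ∑ i ∈ Finset.range M, ((1:ℝ) + ((i:ℕ)+1 : ℕ)) ^ γ := by
            apply Finset.sum_congr rfl; intro i _; push_cast; ring_nf
        _ ≤ ((1 + (M:ℝ)) ^ (γ+1) - 1 ^ (γ+1)) / (γ+1) := by rw [← hint]; exact key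
        _ ≤ ((1 + (M:ℝ)) ^ (γ+1)) / (γ+1) := by gcongr; linarith [Real.one_rpow (γ+1)]
    rw [add_comm 1 M, Finset.sum_range_succ']
    have hcast : ((M + 1 : ℕ) : ℝ) = 1 + (M:ℝ) := by push_cast; ring
    rw [hcast]
    have h1 : ((0:ℕ):ℝ) + 1 = (1:ℝ) := by norm_num
    calc (∑ i ∈ Finset.range M, (((i+1:ℕ) : ℝ) + 1) ^ γ) + (((0:ℕ):ℝ) + 1) ^ γ
        ≤ ((1 + (M:ℝ)) ^ (γ+1)) / (γ+1) + 1 := by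
          rw [h1, Real.one_rpow]; linarith [tailb]
      _ ≤ (1 + 1/(γ+1)) * (1 + (M:ℝ)) ^ (γ+1) := by
          have hNg1' : (1:ℝ) ≤ (1 + (M:ℝ))^(γ+1) := by rw [← hcast]; exact_mod_cast (by rw [add_comm M 1]; exact hNg1)
          have := one_div_pos.2 hγ1
          rw [div_eq_mul_one_div]
          nlinarith [hNg1']

lemma summable_aux {α : ℝ} (hα : 1 < α) :
    Summable (fun n : ℕ => ((n:ℝ) + 1) ^ (-α)) := by
  have h : Summable (fun n : ℕ => (n:ℝ) ^ (-α)) :=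
    Real.summable_nat_rpow.2 (by linarith)
  have := (summable_nat_add_iff 1).2 h
  apply this.congr
  intro n
  push_cast
  ring_nf

lemma tail_sum {α : ℝ} (hα : 1 < α) (N : ℕ) (hN : 1 ≤ N) :
    ∑' k : ℕ, ((N:ℝ) + (k:ℝ) + 1) ^ (-α) ≤ (N:ℝ) ^ (1-α) / (α-1) := by
  have hN1 : (1:ℝ) ≤ N := by exact_mod_cast hN
  apply Summable.tsum_le_of_sum_range_le
  · apply (summable_aux hα).of_nonneg_of_le (fun n => by positivity)
    intro n
    apply Real.rpow_le_rpow_of_nonpos (by positivity)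
      (by linarith [Nat.cast_nonneg (α := ℝ) N]) (by linarith)
  · intro M
    have key : ∑ i ∈ Finset.range M, ((N:ℝ) + ((i:ℕ)+1 : ℕ)) ^ (-α)
        ≤ ∫ t in (N:ℝ)..((N:ℝ) + (M:ℕ)), t ^ (-α) := by
      have := AntitoneOn.sum_le_integral (x₀ := (N:ℝ)) (a := M) (f := fun t : ℝ => t ^ (-α))
        (by intro a ha b hb hab
            exact Real.rpow_le_rpow_of_nonpos (by linarith [ha.1]) hab (by linarith))
      exact this
    have hnotin : (0:ℝ) ∉ Set.uIcc (N:ℝ) ((N:ℝ) + (M:ℕ)) := by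
      rw [Set.uIcc_of_le (le_add_of_nonneg_right (Nat.cast_nonneg M))]
      intro h
      have := (Set.mem_Icc.1 h).1
      linarith
    have hint : ∫ t in (N:ℝ)..((N:ℝ) + (M:ℕ)), t ^ (-α)
        = (((N:ℝ) + (M:ℝ)) ^ (-α+1) - (N:ℝ) ^ (-α+1)) / (-α+1) := by
      rw [integral_rpow (Or.inr ⟨fun h => by have := neg_injective h; linarith, hnotin⟩)]
    calc ∑ i ∈ Finset.range M, ((N:ℝ) + (i:ℝ) + 1) ^ (-α)
        = ∑ i ∈ Finset.range M, ((N:ℝ) + ((i:ℕ)+1 : ℕ)) ^ (-α) := by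
          apply Finset.sum_congr rfl; intro i _; push_cast; ring_nf
      _ ≤ (((N:ℝ) + (M:ℝ)) ^ (-α+1) - (N:ℝ) ^ (-α+1)) / (-α+1) := by rw [← hint]; exact key
      _ = ((N:ℝ) ^ (-α+1) - ((N:ℝ) + (M:ℝ)) ^ (-α+1)) / (α-1) := by
          rw [(by ring : (-α+1:ℝ) = -(α-1)), div_neg, ← neg_div, neg_sub]
      _ ≤ (N:ℝ) ^ (1-α) / (α-1) := by
          rw [(by ring : (1-α:ℝ) = -α+1)]
          gcongr
          · nlinarith [Real.rpow_nonneg (by positivity : (0:ℝ) ≤ (N:ℝ) + (M:ℝ)) (-α+1)]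

lemma sin_diff_le (a b : ℝ) : |Real.sin a - Real.sin b| ≤ |a - b| := by
  rw [Real.sin_sub_sin, abs_mul, abs_mul]
  have h1 : |Real.sin ((a - b)/2)| ≤ |(a-b)/2| := Real.abs_sin_le_abs
  have h2 : |Real.cos ((a + b)/2)| ≤ 1 := Real.abs_cos_le_one _
  have := abs_nonneg ((a-b)/2)
  calc |(2:ℝ)| * |Real.sin ((a - b)/2)| * |Real.cos ((a + b)/2)|
      ≤ |(2:ℝ)| * |(a-b)/2| * 1 := by
        apply mul_le_mul (mul_le_mul le_rfl h1 (abs_nonneg _) (abs_nonneg _)) h2 (abs_nonneg _)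
        positivity
    _ = |a - b| := by rw [abs_div]; norm_num; ring

noncomputable def R (α β x : ℝ) : ℝ :=
  ∑' n : ℕ, Real.sin (Real.pi * ((n : ℝ) + 1) ^ β * x) / ((n : ℝ) + 1) ^ α

lemma fterm_abs_le {α β : ℝ} (hα : 1 < α) (z : ℝ) (n : ℕ) :
    |Real.sin (Real.pi * ((n : ℝ) + 1) ^ β * z) / ((n : ℝ) + 1) ^ α| ≤ ((n:ℝ)+1) ^ (-α) := by
  have hp : (0:ℝ) < ((n:ℝ)+1) ^ α := by positivity
  rw [abs_div, abs_of_pos hp, div_le_iff₀ hp, Real.rpow_neg (by positivity),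
    inv_mul_cancel₀ (ne_of_gt hp)]
  exact Real.abs_sin_le_one _

lemma fsummable {α β : ℝ} (hα : 1 < α) (z : ℝ) :
    Summable (fun n : ℕ => Real.sin (Real.pi * ((n : ℝ) + 1) ^ β * z) / ((n : ℝ) + 1) ^ α) := by
  apply Summable.of_abs
  apply (summable_aux hα).of_nonneg_of_le (fun n => abs_nonneg _) (fterm_abs_le hα z)

set_option maxHeartbeats 1000000 in
theorem stmt_18 (α β : ℝ) (hα : 1 < α) (hβ : α - 1 < β) :
    ∃ C > (0 : ℝ), ∀ x y : ℝ,
      |R α β x - R α β y| ≤ C * |x - y| ^ ((α - 1) / β) := by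
  have hβ0 : 0 < β := by linarith
  set θ := (α - 1) / β with hθdef
  have hθ : 0 < θ := div_pos (by linarith) hβ0
  set γ := β - α with hγdef
  have hγ : -1 < γ := by rw [hγdef]; linarith
  have hγ1 : 0 < γ + 1 := by linarith
  set K := 1 + 1/(γ+1) with hKdef
  have hK : 0 < K := by rw [hKdef]; positivity
  set A := ∑' n : ℕ, ((n:ℝ)+1)^(-α) with hAdef
  have hA0 : 0 ≤ A := tsum_nonneg (fun n => by positivity)
  set C₁ := Real.pi * K * (2:ℝ)^(γ+1) with hC1def
  have hC₁ : 0 ≤ C₁ := by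
    rw [hC1def]
    exact mul_nonneg (mul_nonneg Real.pi_pos.le hK.le)
      (Real.rpow_nonneg (by norm_num) (γ+1))
  set C₂ := 2/(α-1) with hC2def
  have hC₂ : 0 ≤ C₂ := by rw [hC2def]; exact div_nonneg (by norm_num) (by linarith)
  refine ⟨2*A + C₁ + C₂ + 1, by linarith, ?_⟩
  intro x y
  set h := |x - y| with hhdef
  have hh0 : 0 ≤ h := abs_nonneg _
  set d := fun n : ℕ => Real.sin (Real.pi * ((n : ℝ) + 1) ^ β * x) / ((n : ℝ) + 1) ^ α
    - Real.sin (Real.pi * ((n : ℝ) + 1) ^ β * y) / ((n : ℝ) + 1) ^ α with hd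
  have hdabs2 : ∀ n : ℕ, |d n| ≤ 2 * ((n:ℝ)+1)^(-α) := by
    intro n
    calc |d n| ≤ |Real.sin (Real.pi * ((n : ℝ) + 1) ^ β * x) / ((n : ℝ) + 1) ^ α|
        + |Real.sin (Real.pi * ((n : ℝ) + 1) ^ β * y) / ((n : ℝ) + 1) ^ α| := abs_sub _ _
      _ ≤ 2 * ((n:ℝ)+1)^(-α) := by
        have := fterm_abs_le (β := β) hα x n
        have := fterm_abs_le (β := β) hα y n
        linarith
  have hdabs1 : ∀ n : ℕ, |d n| ≤ Real.pi * h * ((n:ℝ)+1)^γ := by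
    intro n
    have hm : (0:ℝ) < (n:ℝ)+1 := by positivity
    have hp : (0:ℝ) < ((n:ℝ)+1)^α := by positivity
    have e1 : d n = (Real.sin (Real.pi * ((n : ℝ) + 1) ^ β * x)
        - Real.sin (Real.pi * ((n : ℝ) + 1) ^ β * y)) / ((n : ℝ) + 1) ^ α := by
      rw [hd]; ring
    rw [e1, abs_div, abs_of_pos hp, div_le_iff₀ hp]
    have e2 : |Real.pi * ((n : ℝ) + 1) ^ β * x - Real.pi * ((n : ℝ) + 1) ^ β * y|
        = Real.pi * ((n:ℝ)+1)^β * h := by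
      rw [← mul_sub, abs_mul, abs_of_nonneg (by positivity : (0:ℝ) ≤ Real.pi * ((n:ℝ)+1)^β), hhdef]
    have e3 : Real.pi * h * ((n:ℝ)+1)^γ * ((n:ℝ)+1)^α = Real.pi * ((n:ℝ)+1)^β * h := by
      rw [mul_assoc (Real.pi * h), ← Real.rpow_add hm,
        (by rw [hγdef]; ring : γ + α = β)]
      ring
    rw [e3, ← e2]
    exact sin_diff_le _ _
  have habs : Summable (fun n : ℕ => |d n|) := by
    apply ((summable_aux hα).mul_left 2).of_nonneg_of_le (fun n => abs_nonneg _) hdabs2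
  have hnorm : |∑' n, d n| ≤ ∑' n, |d n| := by
    have h1 : Summable fun n : ℕ => ‖d n‖ := by simpa [Real.norm_eq_abs] using habs
    have h2 := norm_tsum_le_tsum_norm h1
    simpa [Real.norm_eq_abs] using h2
  have hsub : R α β x - R α β y = ∑' n, d n := by
    unfold R
    rw [← Summable.tsum_sub (fsummable hα x) (fsummable hα y)]
  rcases eq_or_lt_of_le hh0 with h0 | hpos
  · have hxy : x = y := by
      rw [← sub_eq_zero]
      exact abs_eq_zero.mp h0.symm
    rw [hxy]
    have h1 : 0 ≤ h ^ θ := Real.rpow_nonneg hh0 θ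
    have h2 : (0:ℝ) ≤ 2 * A + C₁ + C₂ + 1 := by linarith
    simp only [sub_self, abs_zero]
    positivity
  rcases le_or_gt 1 h with h1 | hlt
  · have hb : |R α β x - R α β y| ≤ 2*A := by
      rw [hsub]
      refine hnorm.trans ?_
      calc ∑' n, |d n| ≤ ∑' n : ℕ, 2 * ((n:ℝ)+1)^(-α) :=
            Summable.tsum_le_tsum hdabs2 habs ((summable_aux hα).mul_left 2)
        _ = 2 * A := by rw [hAdef, tsum_mul_left]
    have hrp : 1 ≤ h ^ θ := Real.one_le_rpow h1 hθ.le
    nlinarith [hb, abs_nonneg (R α β x - R α β y)]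
  · -- 0 < h < 1
    set t := h ^ (-(1/β)) with htdef
    have hexp : -(1/β) ≤ 0 := by
      have : (0:ℝ) ≤ 1/β := by positivity
      linarith
    have ht1 : 1 ≤ t :=
      Real.one_le_rpow_of_pos_of_le_one_of_nonpos hpos hlt.le hexp
    have ht0 : 0 < t := lt_of_lt_of_le one_pos ht1
    set N := ⌈t⌉₊ with hNdef
    have hN1 : 1 ≤ N := Nat.ceil_pos.2 ht0
    have hNt : t ≤ N := Nat.le_ceil t
    have hN2t : (N:ℝ) ≤ 2*t := by
      have := Nat.ceil_lt_add_one ht0.le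
      rw [hNdef]
      linarith
    have hNpos : (0:ℝ) < N := lt_of_lt_of_le ht0 hNt
    have texp : ∀ c : ℝ, t ^ c = h ^ ((-(1/β))*c) := by
      intro c
      rw [htdef, ← Real.rpow_mul hh0]
    have hhead : ∑ i ∈ Finset.range N, |d i| ≤ C₁ * h ^ θ := by
      calc ∑ i ∈ Finset.range N, |d i|
          ≤ ∑ i ∈ Finset.range N, Real.pi * h * ((i:ℝ)+1)^γ :=
            Finset.sum_le_sum (fun i _ => hdabs1 i)
        _ = Real.pi * h * ∑ i ∈ Finset.range N, ((i:ℝ)+1)^γ := by rw [Finset.mul_sum]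
        _ ≤ Real.pi * h * (K * (N:ℝ)^(γ+1)) := by
            apply mul_le_mul_of_nonneg_left _ (by positivity)
            rw [hKdef]
            exact head_sum hγ N hN1
        _ ≤ Real.pi * h * (K * (2*t)^(γ+1)) := by
            apply mul_le_mul_of_nonneg_left _ (by positivity)
            apply mul_le_mul_of_nonneg_left _ hK.le
            exact Real.rpow_le_rpow hNpos.le hN2t hγ1.le
        _ = C₁ * (h * t^(γ+1)) := by
            rw [hC1def, Real.mul_rpow (by norm_num) ht0.le]
            ring
        _ = C₁ * h ^ θ := by
            rw [texp (γ+1), ← Real.rpow_one_add' hh0]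
            · congr 1
              congr 1
              rw [hθdef, hγdef]
              field_simp
              ring
            · rw [hγdef]
              have : 1 + -(1/β) * (β - α + 1) = (α-1)/β := by field_simp; ring
              rw [this]
              exact hθ.ne'
    have hs1 : Summable (fun k : ℕ => ((N:ℝ)+(k:ℝ)+1)^(-α)) := by
      apply ((summable_nat_add_iff N).2 (summable_aux hα)).congr
      intro k
      push_cast
      ring_nf
    have htail : ∑' k : ℕ, |d (k + N)| ≤ C₂ * h ^ θ := by
      calc ∑' k : ℕ, |d (k + N)|
          ≤ ∑' k : ℕ, 2*((N:ℝ)+(k:ℝ)+1)^(-α) := by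
            apply Summable.tsum_le_tsum _ ((summable_nat_add_iff (f := fun n : ℕ => |d n|) N).2 habs) (hs1.mul_left 2)
            intro k
            have h2 := hdabs2 (k+N)
            have hc : (((k+N:ℕ)):ℝ)+1 = (N:ℝ)+(k:ℝ)+1 := by push_cast; ring
            rwa [hc] at h2
        _ = 2 * ∑' k : ℕ, ((N:ℝ)+(k:ℝ)+1)^(-α) := tsum_mul_left
        _ ≤ 2 * ((N:ℝ)^(1-α)/(α-1)) := by
            apply mul_le_mul_of_nonneg_left (tail_sum hα N hN1) (by norm_num)
        _ ≤ 2 * (t^(1-α)/(α-1)) := by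
            have hle : (N:ℝ)^(1-α) ≤ t^(1-α) :=
              Real.rpow_le_rpow_of_nonpos ht0 hNt (by linarith)
            have hd1 : (0:ℝ) < α - 1 := by linarith
            apply mul_le_mul_of_nonneg_left _ (by norm_num)
            exact (div_le_div_iff_of_pos_right hd1).mpr hle
        _ = C₂ * h ^ θ := by
            rw [hC2def, texp (1-α)]
            have : -(1/β) * (1-α) = θ := by rw [hθdef]; field_simp; ring
            rw [this]
            ring
    have hsplit : (∑ i ∈ Finset.range N, |d i|) + ∑' k : ℕ, |d (k + N)| = ∑' n, |d n| :=
      Summable.sum_add_tsum_nat_add N habs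
    rw [hsub]
    have hfin : |∑' n, d n| ≤ (C₁ + C₂) * h ^ θ := by
      refine hnorm.trans ?_
      rw [← hsplit]
      linarith [hhead, htail]
    have hhp : 0 ≤ h ^ θ := Real.rpow_nonneg hh0 θ
    nlinarith [hfin]
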